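/- arXiv:math/0204160 — 3 statements merged into one kernel-verified Lean document; each statement's English description precedes it below -/
import Mathlib

section
/- Let φ : ℂ[[t]]^n → ℂ[[t]]^n be a map given by n formal power series in n variables with φ(0)=0, and let y(t), x(t) ∈ ℂ[[t]]^n with φ(y(t)) = x(t). Suppose k := ord_t det(Dφ(y(t))) < ∞, and let ℓ ≥ 2k+1. Then for every v ∈ ℂ[[t]]^n there exists a unique u ∈ ℂ[[t]]^n such that φ(y(t) + t^{ℓ−k} u) = x(t) + t^ℓ v. -/
noncomputable section

open PowerSeries

/-- The `j`-th formal partial derivative of a multivariate formal power series. -/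
def mvPDeriv {n : ℕ} (j : Fin n) (φ : MvPowerSeries (Fin n) ℂ) :
    MvPowerSeries (Fin n) ℂ :=
  fun m => ((m j : ℂ) + 1) * MvPowerSeries.coeff (m + Finsupp.single j 1) φ

/-- Evaluation (substitution) of a multivariate formal power series `φ` at an `n`-tuple
`y` of formal power series in `t`.  When every `y j` has zero constant term, the `k`-th
coefficient only receives contributions from exponents `m` with all entries `≤ k`, so the
sum below is the (finite) coefficient of `t^k` in the composite `φ(y(t))`. -/
def mvEval {n : ℕ} (φ : MvPowerSeries (Fin n) ℂ) (y : Fin n → PowerSeries ℂ) :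
    PowerSeries ℂ :=
  PowerSeries.mk fun k =>
    ∑ m ∈ Finset.Iic (Finsupp.equivFunOnFinite.symm fun _ : Fin n => k),
      MvPowerSeries.coeff m φ * PowerSeries.coeff k (∏ j, y j ^ m j)

namespace Stmt0

open MvPolynomial Finset

variable {n : ℕ}

def cK (n p : ℕ) : Fin n →₀ ℕ := Finsupp.equivFunOnFinite.symm fun _ => p

lemma cK_apply (p : ℕ) (j : Fin n) : cK n p j = p := rfl

lemma le_cK_iff {m : Fin n →₀ ℕ} {p : ℕ} : m ≤ cK n p ↔ ∀ j, m j ≤ p := by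
  constructor
  · intro h j; exact h j
  · intro h j; exact h j

lemma cK_le_cK {p q : ℕ} (h : p ≤ q) : cK n p ≤ cK n q := fun _ => h

variable {z : Fin n → PowerSeries ℂ}

lemma coeff_prod_eq_zero (hz0 : ∀ j, PowerSeries.constantCoeff (z j) = 0)
    {m : Fin n →₀ ℕ} {p : ℕ} (h : ¬ m ≤ cK n p) :
    PowerSeries.coeff p (∏ j, z j ^ m j) = 0 := by
  obtain ⟨j, hj⟩ : ∃ j, p < m j := by
    by_contra hc
    push_neg at hc
    exact h (le_cK_iff.mpr hc)
  have h1 : (X : ℂ⟦X⟧) ^ (m j) ∣ z j ^ m j :=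
    pow_dvd_pow_of_dvd (PowerSeries.X_dvd_iff.mpr (hz0 j)) _
  have hdvd : (X : ℂ⟦X⟧) ^ (p + 1) ∣ ∏ j, z j ^ m j :=
    (pow_dvd_pow _ hj).trans (h1.trans (Finset.dvd_prod_of_mem _ (Finset.mem_univ j)))
  exact PowerSeries.X_pow_dvd_iff.mp hdvd p (Nat.lt_succ_self p)

def tr (S : Finset (Fin n →₀ ℕ)) (φ : MvPowerSeries (Fin n) ℂ) : MvPolynomial (Fin n) ℂ :=
  ∑ m ∈ S, MvPolynomial.monomial m (MvPowerSeries.coeff m φ)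

lemma coeff_aeval_tr (S : Finset (Fin n →₀ ℕ)) (φ : MvPowerSeries (Fin n) ℂ) (p : ℕ) :
    PowerSeries.coeff p (MvPolynomial.aeval z (tr S φ)) =
      ∑ m ∈ S, MvPowerSeries.coeff m φ * PowerSeries.coeff p (∏ j, z j ^ m j) := by
  rw [tr, map_sum, map_sum]
  refine Finset.sum_congr rfl fun m _ => ?_
  rw [MvPolynomial.aeval_monomial, Finsupp.prod_pow]
  simp [PowerSeries.algebraMap_apply, PowerSeries.coeff_C_mul]

lemma coeff_mvEval (hz0 : ∀ j, PowerSeries.constantCoeff (z j) = 0)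
    (φ : MvPowerSeries (Fin n) ℂ) {S : Finset (Fin n →₀ ℕ)} {p : ℕ}
    (hS : Finset.Iic (cK n p) ⊆ S) :
    PowerSeries.coeff p (mvEval φ z) =
      PowerSeries.coeff p (MvPolynomial.aeval z (tr S φ)) := by
  rw [coeff_aeval_tr, mvEval, PowerSeries.coeff_mk]
  refine Finset.sum_subset hS fun m _ hm => ?_
  rw [coeff_prod_eq_zero hz0 (by simpa [Finset.mem_Iic, cK] using hm), mul_zero]

lemma aeval_sub_dvd {z z' : Fin n → ℂ⟦X⟧} {d : ℕ}
    (h : ∀ j, (X : ℂ⟦X⟧) ^ d ∣ z j - z' j) (P : MvPolynomial (Fin n) ℂ) :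
    (X : ℂ⟦X⟧) ^ d ∣ MvPolynomial.aeval z P - MvPolynomial.aeval z' P := by
  induction P using MvPolynomial.induction_on with
  | C a => simp
  | add p q hp hq =>
      have h2 := dvd_add hp hq
      convert h2 using 1
      simp only [map_add]
      ring
  | mul_X p i hp =>
      have key : MvPolynomial.aeval z (p * MvPolynomial.X i)
            - MvPolynomial.aeval z' (p * MvPolynomial.X i)
          = (MvPolynomial.aeval z p) * (z i - z' i)
            + (MvPolynomial.aeval z p - MvPolynomial.aeval z' p) * z' i := by
        simp only [map_mul, MvPolynomial.aeval_X]
        ring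
      rw [key]
      exact dvd_add ((h i).mul_left _) (hp.mul_right _)

lemma taylor_poly {z δ : Fin n → ℂ⟦X⟧} {d : ℕ} (hδ : ∀ j, (X : ℂ⟦X⟧) ^ d ∣ δ j)
    (P : MvPolynomial (Fin n) ℂ) :
    (X : ℂ⟦X⟧) ^ (2 * d) ∣ MvPolynomial.aeval (fun j => z j + δ j) P - MvPolynomial.aeval z P
      - ∑ j, MvPolynomial.aeval z (MvPolynomial.pderiv j P) * δ j := by
  induction P using MvPolynomial.induction_on with
  | C a => simp
  | add p q hp hq =>
      have h2 := dvd_add hp hq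
      convert h2 using 1
      simp only [map_add, add_mul, Finset.sum_add_distrib]
      ring
  | mul_X p i hp =>
      have hsub : (X : ℂ⟦X⟧) ^ d ∣ MvPolynomial.aeval (fun j => z j + δ j) p
          - MvPolynomial.aeval z p := by
        refine aeval_sub_dvd (fun j => ?_) p
        simpa using hδ j
      have hsum : ∑ j, MvPolynomial.aeval z (MvPolynomial.pderiv j (p * MvPolynomial.X i)) * δ j
          = (∑ j, MvPolynomial.aeval z (MvPolynomial.pderiv j p) * δ j) * z i
            + MvPolynomial.aeval z p * δ i := by
        have h1 : ∀ j, MvPolynomial.aeval z (MvPolynomial.pderiv j (p * MvPolynomial.X i)) * δ j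
            = MvPolynomial.aeval z (MvPolynomial.pderiv j p) * δ j * z i
              + (if j = i then MvPolynomial.aeval z p * δ j else 0) := by
          intro j
          rw [MvPolynomial.pderiv_mul, map_add, map_mul, map_mul, MvPolynomial.aeval_X,
            MvPolynomial.pderiv_X]
          by_cases h : j = i
          · subst h; simp; ring
          · simp [Pi.single_apply, h]; ring
        rw [Finset.sum_congr rfl fun j _ => h1 j, Finset.sum_add_distrib, ← Finset.sum_mul,
          Finset.sum_ite_eq' Finset.univ i (fun j => MvPolynomial.aeval z p * δ j)]
        simp
      have key : MvPolynomial.aeval (fun j => z j + δ j) (p * MvPolynomial.X i)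
            - MvPolynomial.aeval z (p * MvPolynomial.X i)
            - ∑ j, MvPolynomial.aeval z (MvPolynomial.pderiv j (p * MvPolynomial.X i)) * δ j
          = z i * (MvPolynomial.aeval (fun j => z j + δ j) p - MvPolynomial.aeval z p
              - ∑ j, MvPolynomial.aeval z (MvPolynomial.pderiv j p) * δ j)
            + (MvPolynomial.aeval (fun j => z j + δ j) p - MvPolynomial.aeval z p) * δ i := by
        rw [hsum]
        simp only [map_mul, MvPolynomial.aeval_X]
        ring
      rw [key]
      refine dvd_add (hp.mul_left _) ?_
      rw [two_mul, pow_add]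
      exact mul_dvd_mul hsub (hδ i)

lemma coeff_mvPDeriv (j : Fin n) (φ : MvPowerSeries (Fin n) ℂ) (m : Fin n →₀ ℕ) :
    MvPowerSeries.coeff m (mvPDeriv j φ) =
      ((m j : ℂ) + 1) * MvPowerSeries.coeff (m + Finsupp.single j 1) φ := rfl

lemma coeff_aeval_pderiv_tr (hz0 : ∀ j, PowerSeries.constantCoeff (z j) = 0)
    (φ : MvPowerSeries (Fin n) ℂ) (j : Fin n) {a p : ℕ} (hap : a ≤ p) :
    PowerSeries.coeff a (MvPolynomial.aeval z
        (MvPolynomial.pderiv j (tr (Finset.Iic (cK n (p + 1))) φ)))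
      = PowerSeries.coeff a (mvEval (mvPDeriv j φ) z) := by
  classical
  have hrhs : PowerSeries.coeff a (mvEval (mvPDeriv j φ) z)
      = ∑ m ∈ Finset.Iic (cK n a),
          MvPowerSeries.coeff m (mvPDeriv j φ) * PowerSeries.coeff a (∏ i, z i ^ m i) := by
    rw [mvEval, PowerSeries.coeff_mk]; rfl
  -- compute LHS
  have hlhs : PowerSeries.coeff a (MvPolynomial.aeval z
        (MvPolynomial.pderiv j (tr (Finset.Iic (cK n (p + 1))) φ)))
      = ∑ m ∈ Finset.Iic (cK n (p + 1)),
          MvPowerSeries.coeff m φ * (m j : ℂ)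
            * PowerSeries.coeff a (∏ i, z i ^ ((m - Finsupp.single j 1 : Fin n →₀ ℕ) i)) := by
    rw [tr, map_sum, map_sum, map_sum]
    refine Finset.sum_congr rfl fun m _ => ?_
    simp only [MvPolynomial.pderiv_monomial, MvPolynomial.aeval_monomial, Finsupp.prod_pow,
      PowerSeries.algebraMap_apply, PowerSeries.coeff_C_mul, Algebra.algebraMap_self_apply]
  rw [hlhs, hrhs]
  -- restrict LHS to the image of Iic (cK n a) under (· + single j 1)
  have himsub : (Finset.Iic (cK n a)).image (· + Finsupp.single j 1)
      ⊆ Finset.Iic (cK n (p + 1)) := by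
    intro m hm
    simp only [Finset.mem_image, Finset.mem_Iic] at hm ⊢
    obtain ⟨m', hm', rfl⟩ := hm
    intro i
    have h1 : m' i ≤ a := hm' i
    have h2 : (Finsupp.single j 1 : Fin n →₀ ℕ) i ≤ 1 := by
      simp [Finsupp.single_apply]; split <;> omega
    have h3 : (m' + Finsupp.single j 1 : Fin n →₀ ℕ) i = m' i + (Finsupp.single j 1 : Fin n →₀ ℕ) i := rfl
    rw [h3, cK_apply]
    omega
  rw [← Finset.sum_subset himsub ?vanish]
  case vanish =>
    intro m hm hmnot
    by_cases hmj : m j = 0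
    · simp [hmj]
    · have hm' : m - Finsupp.single j 1 + Finsupp.single j 1 = m := by
        ext i
        simp only [Finsupp.coe_add, Finsupp.coe_tsub, Pi.add_apply, Pi.sub_apply,
          Finsupp.single_apply]
        split <;> rename_i h
        · subst h; omega
        · omega
      have hnotle : ¬ (m - Finsupp.single j 1) ≤ cK n a := by
        intro hle
        exact hmnot (Finset.mem_image.mpr ⟨m - Finsupp.single j 1, Finset.mem_Iic.mpr hle, hm'⟩)
      rw [coeff_prod_eq_zero hz0 hnotle, mul_zero]
  rw [Finset.sum_image (fun m₁ _ m₂ _ h => by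
    exact add_left_injective _ h)]
  refine Finset.sum_congr rfl fun m hm => ?_
  have h1 : (m + Finsupp.single j 1) - Finsupp.single j 1 = m := by
    ext i
    simp only [Finsupp.coe_add, Finsupp.coe_tsub, Pi.add_apply, Pi.sub_apply]
    omega
  have h2 : (m + Finsupp.single j 1 : Fin n →₀ ℕ) j = m j + 1 := by
    simp [Finsupp.add_apply, Finsupp.single_apply]
  rw [h1, h2, coeff_mvPDeriv]
  push_cast
  ring

lemma mvEval_sub_dvd (φ : MvPowerSeries (Fin n) ℂ) {z z' : Fin n → ℂ⟦X⟧}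
    (hz0 : ∀ j, PowerSeries.constantCoeff (z j) = 0)
    (hz'0 : ∀ j, PowerSeries.constantCoeff (z' j) = 0) {d : ℕ}
    (h : ∀ j, (X : ℂ⟦X⟧) ^ d ∣ z j - z' j) :
    (X : ℂ⟦X⟧) ^ d ∣ mvEval φ z - mvEval φ z' := by
  rw [PowerSeries.X_pow_dvd_iff]
  intro p hp
  rw [map_sub, coeff_mvEval hz0 φ (le_refl _), coeff_mvEval hz'0 φ (le_refl _), ← map_sub]
  exact PowerSeries.X_pow_dvd_iff.mp (aeval_sub_dvd h _) p hp

lemma mvEval_taylor (φ : MvPowerSeries (Fin n) ℂ) {z δ : Fin n → ℂ⟦X⟧}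
    (hz0 : ∀ j, PowerSeries.constantCoeff (z j) = 0) {d : ℕ} (hd : 1 ≤ d)
    (hδ : ∀ j, (X : ℂ⟦X⟧) ^ d ∣ δ j) :
    (X : ℂ⟦X⟧) ^ (2 * d) ∣ mvEval φ (fun j => z j + δ j) - mvEval φ z
      - ∑ j, mvEval (mvPDeriv j φ) z * δ j := by
  rw [PowerSeries.X_pow_dvd_iff]
  intro p hp
  have hδ0 : ∀ j, PowerSeries.constantCoeff (δ j) = 0 := by
    intro j
    have := PowerSeries.X_pow_dvd_iff.mp (hδ j) 0 (by omega)
    simpa using this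
  have hz'0 : ∀ j, PowerSeries.constantCoeff (z j + δ j) = 0 := by
    intro j; rw [map_add, hz0 j, hδ0 j, add_zero]
  set P := tr (Finset.Iic (cK n (p + 1))) φ with hP
  have hsub : Finset.Iic (cK n p) ⊆ Finset.Iic (cK n (p + 1)) :=
    Finset.Iic_subset_Iic.mpr (cK_le_cK (by omega))
  have h1 : PowerSeries.coeff p (mvEval φ (fun j => z j + δ j))
      = PowerSeries.coeff p (MvPolynomial.aeval (fun j => z j + δ j) P) :=
    coeff_mvEval hz'0 φ hsub
  have h2 : PowerSeries.coeff p (mvEval φ z)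
      = PowerSeries.coeff p (MvPolynomial.aeval z P) :=
    coeff_mvEval hz0 φ hsub
  have h3 : PowerSeries.coeff p (∑ j, mvEval (mvPDeriv j φ) z * δ j)
      = PowerSeries.coeff p (∑ j, MvPolynomial.aeval z (MvPolynomial.pderiv j P) * δ j) := by
    rw [map_sum, map_sum]
    refine Finset.sum_congr rfl fun j _ => ?_
    rw [PowerSeries.coeff_mul, PowerSeries.coeff_mul]
    refine Finset.sum_congr rfl fun ab hab => ?_
    have hle : ab.1 ≤ p := by
      have := Finset.HasAntidiagonal.antidiagonal.fst_le hab
      omega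
    rw [coeff_aeval_pderiv_tr hz0 φ j hle]
  rw [map_sub, map_sub, h1, h2, h3, ← map_sub, ← map_sub]
  exact PowerSeries.X_pow_dvd_iff.mp (taylor_poly hδ P) p hp

lemma X_pow_ne_zero (a : ℕ) : (X : ℂ⟦X⟧) ^ a ≠ 0 := pow_ne_zero a PowerSeries.X_ne_zero

lemma cancel_X_pow {a : ℕ} {f g : ℂ⟦X⟧} (h : (X : ℂ⟦X⟧) ^ a * f = (X : ℂ⟦X⟧) ^ a * g) :
    f = g := mul_left_cancel₀ (X_pow_ne_zero a) h

def shiftk (a : ℕ) (f : ℂ⟦X⟧) : ℂ⟦X⟧ := PowerSeries.mk fun p => PowerSeries.coeff (p + a) f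

lemma X_pow_mul_shiftk {a : ℕ} {f : ℂ⟦X⟧} (h : (X : ℂ⟦X⟧) ^ a ∣ f) :
    (X : ℂ⟦X⟧) ^ a * shiftk a f = f := by
  ext p
  rw [PowerSeries.coeff_X_pow_mul']
  split_ifs with hpa
  · rw [shiftk, PowerSeries.coeff_mk]
    have : p - a + a = p := by omega
    rw [this]
  · exact (PowerSeries.X_pow_dvd_iff.mp h p (by omega)).symm

lemma dvd_shiftk {a s : ℕ} {f : ℂ⟦X⟧} (h : (X : ℂ⟦X⟧) ^ (a + s) ∣ f) :
    (X : ℂ⟦X⟧) ^ s ∣ shiftk a f := by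
  obtain ⟨g, hg⟩ := h
  refine ⟨g, cancel_X_pow (a := a) ?_⟩
  rw [X_pow_mul_shiftk ((pow_dvd_pow _ (Nat.le_add_right a s)).trans ⟨g, hg⟩), hg, pow_add]
  ring

end Stmt0

open Stmt0 in
/-- formal inverse function theorem of Denef–Loeser: let
`φ : ℂ[[t]]^n → ℂ[[t]]^n` be given by `n` formal power series in `n` variables with
`φ(0) = 0`, and `y, x ∈ ℂ[[t]]^n` (arcs through the origin) with `φ(y(t)) = x(t)`.
If `k = ord_t det Dφ(y(t)) < ∞` and `ℓ ≥ 2k + 1`, then for every `v ∈ ℂ[[t]]^n` there is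
a unique `u ∈ ℂ[[t]]^n` with `φ(y(t) + t^{ℓ-k} u) = x(t) + t^ℓ v`. -/
theorem stmt_0 (n : ℕ) (φ : Fin n → MvPowerSeries (Fin n) ℂ)
    (hφ0 : ∀ i, MvPowerSeries.constantCoeff (φ i) = 0)
    (y x : Fin n → PowerSeries ℂ)
    (hy0 : ∀ j, PowerSeries.constantCoeff (y j) = 0)
    (hyx : ∀ i, mvEval (φ i) y = x i)
    (k : ℕ)
    (hk : (Matrix.det fun i j : Fin n => mvEval (mvPDeriv j (φ i)) y).order = (k : ℕ∞))
    (ℓ : ℕ) (hℓ : 2 * k + 1 ≤ ℓ) (v : Fin n → PowerSeries ℂ) :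
    ∃! u : Fin n → PowerSeries ℂ,
      ∀ i, mvEval (φ i) (fun j => y j + PowerSeries.X ^ (ℓ - k) * u j) =
        x i + PowerSeries.X ^ ℓ * v i := by
  classical
  set e := ℓ - k with he
  have hek : k + 1 ≤ e := by omega
  have hle : ℓ = e + k := by omega
  have h2e : ℓ + 1 ≤ 2 * e := by omega
  set A : Matrix (Fin n) (Fin n) ℂ⟦X⟧ := fun i j : Fin n => mvEval (mvPDeriv j (φ i)) y with hA
  obtain ⟨hdk, hdlt⟩ := PowerSeries.order_eq_nat.mp hk
  obtain ⟨c, hc⟩ : (X : ℂ⟦X⟧) ^ k ∣ A.det := PowerSeries.X_pow_dvd_iff.mpr hdlt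
  have hc0 : PowerSeries.constantCoeff c ≠ 0 := by
    intro h0
    apply hdk
    have h1 := PowerSeries.coeff_X_pow_mul c k 0
    rw [zero_add] at h1
    rw [hc, h1, PowerSeries.coeff_zero_eq_constantCoeff, h0]
  obtain ⟨cu, hcu⟩ : IsUnit c :=
    PowerSeries.isUnit_iff_constantCoeff.mpr (isUnit_iff_ne_zero.mpr hc0)
  set cuInv : ℂ⟦X⟧ := ((cu⁻¹ : ℂ⟦X⟧ˣ) : ℂ⟦X⟧) with hcuInv
  have hcc : cuInv * c = 1 := by rw [← hcu, hcuInv]; exact cu.inv_mul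
  set Hm : (Fin n → ℂ⟦X⟧) → Fin n → ℂ⟦X⟧ := fun u i =>
    mvEval (φ i) (fun j => y j + X ^ e * u j) - x i - X ^ ℓ * v i with hHm
  have hz0 : ∀ u : Fin n → ℂ⟦X⟧, ∀ j,
      PowerSeries.constantCoeff (y j + X ^ e * u j) = 0 := by
    intro u j
    rw [map_add, hy0 j, map_mul, map_pow, PowerSeries.constantCoeff_X,
      zero_pow (by omega), zero_mul, add_zero]
  -- Taylor expansion of the composite along a perturbation
  have taylorG : ∀ (u δv : Fin n → ℂ⟦X⟧) (s : ℕ), (∀ j, (X : ℂ⟦X⟧) ^ s ∣ δv j) → ∀ i,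
      (X : ℂ⟦X⟧) ^ (2 * (e + s)) ∣
        mvEval (φ i) (fun j => y j + X ^ e * (u j + δv j))
        - mvEval (φ i) (fun j => y j + X ^ e * u j)
        - ∑ j, mvEval (mvPDeriv j (φ i)) (fun j' => y j' + X ^ e * u j')
            * ((X : ℂ⟦X⟧) ^ e * δv j) := by
    intro u δv s hδv i
    have h := mvEval_taylor (φ i) (z := fun j => y j + X ^ e * u j)
      (δ := fun j => (X : ℂ⟦X⟧) ^ e * δv j) (hz0 u) (d := e + s) (by omega)
      (fun j => by rw [pow_add]; exact mul_dvd_mul_left _ (hδv j))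
    have heq : (fun j => (y j + X ^ e * u j) + X ^ e * δv j)
        = (fun j => y j + X ^ e * (u j + δv j)) := by
      funext j; ring
    rw [heq] at h
    exact h
  -- the matrix entries at perturbed points differ from A by X^e
  have hE : ∀ (u : Fin n → ℂ⟦X⟧) (i j : Fin n), (X : ℂ⟦X⟧) ^ e ∣
      mvEval (mvPDeriv j (φ i)) (fun j' => y j' + X ^ e * u j') - A i j := by
    intro u i j
    refine mvEval_sub_dvd _ (hz0 u) hy0 fun j' => ?_
    have : (y j' + X ^ e * u j') - y j' = X ^ e * u j' := by ring
    rw [this]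
    exact dvd_mul_right _ _
  -- the Newton correction
  set δfun : (Fin n → ℂ⟦X⟧) → Fin n → ℂ⟦X⟧ := fun u j =>
    -(cuInv * shiftk ℓ (A.adjugate.mulVec (Hm u) j)) with hδfun
  -- main iteration step
  have step : ∀ (u : Fin n → ℂ⟦X⟧) (s : ℕ), (∀ i, (X : ℂ⟦X⟧) ^ (ℓ + s) ∣ Hm u i) →
      (∀ j, (X : ℂ⟦X⟧) ^ s ∣ δfun u j) ∧
      (∀ i, (X : ℂ⟦X⟧) ^ (ℓ + s + 1) ∣ Hm (fun j => u j + δfun u j) i) := by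
    intro u s hu
    have hadj : ∀ j, (X : ℂ⟦X⟧) ^ (ℓ + s) ∣ A.adjugate.mulVec (Hm u) j := by
      intro j
      simp only [Matrix.mulVec, dotProduct]
      exact Finset.dvd_sum fun i _ => (hu i).mul_left _
    have hwdef : ∀ j, (X : ℂ⟦X⟧) ^ ℓ * shiftk ℓ (A.adjugate.mulVec (Hm u) j)
        = A.adjugate.mulVec (Hm u) j :=
      fun j => X_pow_mul_shiftk ((pow_dvd_pow _ (by omega)).trans (hadj j))
    set w : Fin n → ℂ⟦X⟧ := fun j => shiftk ℓ (A.adjugate.mulVec (Hm u) j) with hw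
    have hws : ∀ j, (X : ℂ⟦X⟧) ^ s ∣ w j := fun j => dvd_shiftk (hadj j)
    have hδs : ∀ j, (X : ℂ⟦X⟧) ^ s ∣ δfun u j := by
      intro j
      rw [hδfun]
      exact ((hws j).mul_left _).neg_right
    refine ⟨hδs, ?_⟩
    choose hvec hHeq using fun i => hu i
    have hAw : ∀ i, (X : ℂ⟦X⟧) ^ ℓ * A.mulVec w i = A.det * Hm u i := by
      intro i
      have h1 : A.mulVec (A.adjugate.mulVec (Hm u)) i = A.det * Hm u i := by
        rw [Matrix.mulVec_mulVec, Matrix.mul_adjugate, Matrix.smul_mulVec,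
          Matrix.one_mulVec]
        rfl
      rw [← h1]
      have h2 : A.adjugate.mulVec (Hm u) = fun j => (X : ℂ⟦X⟧) ^ ℓ * w j := by
        funext j
        exact (hwdef j).symm
      rw [h2]
      simp only [Matrix.mulVec, dotProduct, Finset.mul_sum]
      exact Finset.sum_congr rfl fun j _ => by ring
    have hAw' : ∀ i, A.mulVec w i = (X : ℂ⟦X⟧) ^ (k + s) * (c * hvec i) := by
      intro i
      apply cancel_X_pow (a := ℓ)
      rw [hAw i, hc, hHeq i, hle]
      rw [pow_add, pow_add, pow_add]
      ring
    have hAδ : ∀ i, ∑ j, A i j * ((X : ℂ⟦X⟧) ^ e * δfun u j) = -(Hm u i) := by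
      intro i
      have hδw : ∀ j, δfun u j = -(cuInv * w j) := fun j => rfl
      have h2 : ∑ j, A i j * ((X : ℂ⟦X⟧) ^ e * δfun u j)
          = -((X : ℂ⟦X⟧) ^ e * (cuInv * A.mulVec w i)) := by
        have hmv : A.mulVec w i = ∑ j, A i j * w j := rfl
        rw [hmv, Finset.mul_sum, Finset.mul_sum, ← Finset.sum_neg_distrib]
        exact Finset.sum_congr rfl fun j _ => by rw [hδw j]; ring
      rw [h2, hAw' i, hHeq i, hle]
      have h3 : (X : ℂ⟦X⟧) ^ e * (cuInv * ((X : ℂ⟦X⟧) ^ (k + s) * (c * hvec i)))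
          = (cuInv * c) * ((X : ℂ⟦X⟧) ^ (e + k + s) * hvec i) := by
        rw [pow_add, pow_add]
        ring
      rw [h3, hcc, one_mul]
    intro i
    have hT := taylorG u (δfun u) s hδs i
    have hAδ' : Hm (fun j => u j + δfun u j) i
        = (mvEval (φ i) (fun j => y j + X ^ e * (u j + δfun u j))
            - mvEval (φ i) (fun j => y j + X ^ e * u j)
            - ∑ j, mvEval (mvPDeriv j (φ i)) (fun j' => y j' + X ^ e * u j')
                * ((X : ℂ⟦X⟧) ^ e * δfun u j))
          + ∑ j, (mvEval (mvPDeriv j (φ i)) (fun j' => y j' + X ^ e * u j') - A i j)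
              * ((X : ℂ⟦X⟧) ^ e * δfun u j) := by
      have expand : ∑ j, (mvEval (mvPDeriv j (φ i)) (fun j' => y j' + X ^ e * u j') - A i j)
              * ((X : ℂ⟦X⟧) ^ e * δfun u j)
          = ∑ j, mvEval (mvPDeriv j (φ i)) (fun j' => y j' + X ^ e * u j')
              * ((X : ℂ⟦X⟧) ^ e * δfun u j)
            - ∑ j, A i j * ((X : ℂ⟦X⟧) ^ e * δfun u j) := by
        rw [← Finset.sum_sub_distrib]
        exact Finset.sum_congr rfl fun j _ => by ring
      rw [expand, hAδ i]
      simp only [hHm]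
      ring
    rw [hAδ']
    refine dvd_add ((pow_dvd_pow _ (by omega)).trans hT) (Finset.dvd_sum fun j _ => ?_)
    have h1 : (X : ℂ⟦X⟧) ^ (e + (e + s)) ∣
        (mvEval (mvPDeriv j (φ i)) (fun j' => y j' + X ^ e * u j') - A i j)
          * ((X : ℂ⟦X⟧) ^ e * δfun u j) := by
      rw [pow_add]
      exact mul_dvd_mul (hE u i j) (by rw [pow_add]; exact mul_dvd_mul_left _ (hδs j))
    exact (pow_dvd_pow _ (by omega)).trans h1
  -- base case
  have base : ∀ i, (X : ℂ⟦X⟧) ^ (ℓ + 0) ∣ Hm (fun _ => 0) i := by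
    intro i
    have h0 : mvEval (φ i) (fun j => y j + X ^ e * (0 : ℂ⟦X⟧)) = x i := by
      have : (fun j => y j + X ^ e * (0 : ℂ⟦X⟧)) = y := by funext j; ring
      rw [this]
      exact hyx i
    simp only [hHm]
    rw [h0]
    have h1 : x i - x i - X ^ ℓ * v i = -(X ^ ℓ * v i) := by ring
    rw [h1, add_zero]
    exact (dvd_mul_right _ _).neg_right
  -- the iteration sequence
  set useq : ℕ → Fin n → ℂ⟦X⟧ :=
    fun s => Nat.rec (fun _ => (0 : ℂ⟦X⟧)) (fun _ us j => us j + δfun us j) s with huseq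
  have useq_succ : ∀ s, useq (s + 1) = fun j => useq s j + δfun (useq s) j := fun s => rfl
  have hinv : ∀ s, ∀ i, (X : ℂ⟦X⟧) ^ (ℓ + s) ∣ Hm (useq s) i := by
    intro s
    induction s with
    | zero => exact base
    | succ s ih =>
        rw [useq_succ]
        exact (step (useq s) s ih).2
  have hdel : ∀ s j, (X : ℂ⟦X⟧) ^ s ∣ useq (s + 1) j - useq s j := by
    intro s j
    rw [useq_succ]
    have h1 : useq s j + δfun (useq s) j - useq s j = δfun (useq s) j := by ring
    rw [h1]
    exact (step (useq s) s (hinv s)).1 j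
  have htel : ∀ s t, s ≤ t → ∀ j, (X : ℂ⟦X⟧) ^ s ∣ useq t j - useq s j := by
    intro s t hst j
    induction t with
    | zero =>
        have h0 : s = 0 := by omega
        subst h0
        simp
    | succ t iht =>
        rcases Nat.eq_or_lt_of_le hst with h | h
        · rw [h]; simp
        · have hst' : s ≤ t := by omega
          have h1 := iht hst'
          have h2 := (pow_dvd_pow (X : ℂ⟦X⟧) hst').trans (hdel t j)
          have h3 : useq (t + 1) j - useq s j
              = (useq (t + 1) j - useq t j) + (useq t j - useq s j) := by ring
          rw [h3]
          exact dvd_add h2 h1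
  -- the limit
  set ulim : Fin n → ℂ⟦X⟧ :=
    fun j => PowerSeries.mk fun p => PowerSeries.coeff p (useq (p + 1) j) with hulim
  have hlim : ∀ s j, (X : ℂ⟦X⟧) ^ s ∣ ulim j - useq s j := by
    intro s j
    rw [PowerSeries.X_pow_dvd_iff]
    intro p hp
    rw [map_sub]
    have hco : PowerSeries.coeff p (ulim j) = PowerSeries.coeff p (useq (p + 1) j) := by
      rw [hulim, PowerSeries.coeff_mk]
    rw [hco]
    rcases le_total (p + 1) s with h | h
    · have h2 := PowerSeries.X_pow_dvd_iff.mp (htel (p + 1) s h j) p (by omega)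
      rw [map_sub] at h2
      linear_combination -h2
    · have h2 := PowerSeries.X_pow_dvd_iff.mp (htel s (p + 1) h j) p (by omega)
      rw [map_sub] at h2
      linear_combination h2
  have hfinal : ∀ i, Hm ulim i = 0 := by
    intro i
    refine PowerSeries.ext fun N => ?_
    have hGdiff : (X : ℂ⟦X⟧) ^ (e + (N + 1)) ∣
        mvEval (φ i) (fun j => y j + X ^ e * ulim j)
          - mvEval (φ i) (fun j => y j + X ^ e * useq (N + 1) j) := by
      refine mvEval_sub_dvd _ (hz0 ulim) (hz0 (useq (N + 1))) fun j => ?_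
      have h1 : (y j + X ^ e * ulim j) - (y j + X ^ e * useq (N + 1) j)
          = X ^ e * (ulim j - useq (N + 1) j) := by ring
      rw [h1, pow_add]
      exact mul_dvd_mul_left _ (hlim (N + 1) j)
    have hHdiff : Hm ulim i - Hm (useq (N + 1)) i
        = mvEval (φ i) (fun j => y j + X ^ e * ulim j)
          - mvEval (φ i) (fun j => y j + X ^ e * useq (N + 1) j) := by
      simp only [hHm]
      ring
    have hco1 : PowerSeries.coeff N (Hm ulim i - Hm (useq (N + 1)) i) = 0 := by
      rw [hHdiff]
      exact PowerSeries.X_pow_dvd_iff.mp hGdiff N (by omega)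
    have hco2 : PowerSeries.coeff N (Hm (useq (N + 1)) i) = 0 :=
      PowerSeries.X_pow_dvd_iff.mp (hinv (N + 1) i) N (by omega)
    rw [map_sub] at hco1
    rw [map_zero]
    linear_combination hco1 + hco2
  -- uniqueness
  have uniq : ∀ u u' : Fin n → ℂ⟦X⟧, (∀ i, Hm u i = 0) → (∀ i, Hm u' i = 0) → u = u' := by
    intro u u' hu hu'
    have hGG : ∀ i, mvEval (φ i) (fun j => y j + X ^ e * u j)
        = mvEval (φ i) (fun j => y j + X ^ e * u' j) := by
      intro i
      have h1 := hu i
      have h2 := hu' i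
      simp only [hHm] at h1 h2
      linear_combination h1 - h2
    have hdvdall : ∀ m : ℕ, ∀ j, (X : ℂ⟦X⟧) ^ m ∣ u j - u' j := by
      intro m
      induction m with
      | zero => intro j; simpa using one_dvd _
      | succ m ih =>
          have hrepl : (fun j => y j + X ^ e * (u' j + (u j - u' j)))
              = (fun j => y j + X ^ e * u j) := by
            funext j
            ring
          have hT := fun i => taylorG u' (fun j => u j - u' j) m ih i
          have hAd : ∀ i, (X : ℂ⟦X⟧) ^ (e + m) ∣ ∑ j, A i j * (u j - u' j) := by
            intro i
            have hT' := hT i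
            rw [hrepl] at hT'
            have hsplit : ∑ j, mvEval (mvPDeriv j (φ i)) (fun j' => y j' + X ^ e * u' j')
                  * ((X : ℂ⟦X⟧) ^ e * (u j - u' j))
                = ∑ j, (mvEval (mvPDeriv j (φ i)) (fun j' => y j' + X ^ e * u' j') - A i j)
                    * ((X : ℂ⟦X⟧) ^ e * (u j - u' j))
                  + (X : ℂ⟦X⟧) ^ e * ∑ j, A i j * (u j - u' j) := by
              rw [Finset.mul_sum, ← Finset.sum_add_distrib]
              exact Finset.sum_congr rfl fun j _ => by ring
            have hdvd1 : (X : ℂ⟦X⟧) ^ (2 * e + m) ∣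
                ∑ j, (mvEval (mvPDeriv j (φ i)) (fun j' => y j' + X ^ e * u' j') - A i j)
                  * ((X : ℂ⟦X⟧) ^ e * (u j - u' j)) := by
              refine Finset.dvd_sum fun j _ => ?_
              have h1 : (X : ℂ⟦X⟧) ^ (e + (e + m)) ∣
                  (mvEval (mvPDeriv j (φ i)) (fun j' => y j' + X ^ e * u' j') - A i j)
                    * ((X : ℂ⟦X⟧) ^ e * (u j - u' j)) := by
                rw [pow_add]
                exact mul_dvd_mul (hE u' i j) (by rw [pow_add]; exact mul_dvd_mul_left _ (ih j))
              exact (pow_dvd_pow _ (by omega)).trans h1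
            have hdvd2 : (X : ℂ⟦X⟧) ^ (2 * e + m) ∣
                (X : ℂ⟦X⟧) ^ e * ∑ j, A i j * (u j - u' j) := by
              have heq2 : (X : ℂ⟦X⟧) ^ e * ∑ j, A i j * (u j - u' j)
                  = (mvEval (φ i) (fun j => y j + X ^ e * u j)
                      - mvEval (φ i) (fun j => y j + X ^ e * u' j))
                    - (mvEval (φ i) (fun j => y j + X ^ e * u j)
                      - mvEval (φ i) (fun j => y j + X ^ e * u' j)
                      - ∑ j, mvEval (mvPDeriv j (φ i)) (fun j' => y j' + X ^ e * u' j')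
                          * ((X : ℂ⟦X⟧) ^ e * (u j - u' j)))
                    - ∑ j, (mvEval (mvPDeriv j (φ i)) (fun j' => y j' + X ^ e * u' j') - A i j)
                        * ((X : ℂ⟦X⟧) ^ e * (u j - u' j)) := by
                rw [hsplit]
                ring
              rw [heq2]
              have hGz : mvEval (φ i) (fun j => y j + X ^ e * u j)
                  - mvEval (φ i) (fun j => y j + X ^ e * u' j) = 0 := by
                linear_combination hGG i
              refine dvd_sub (dvd_sub ?_ ((pow_dvd_pow _ (by omega)).trans hT')) hdvd1
              rw [hGz]
              exact dvd_zero _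
            obtain ⟨g, hg⟩ := hdvd2
            refine ⟨g, cancel_X_pow (a := e) ?_⟩
            rw [hg]
            rw [show 2 * e + m = e + (e + m) by omega, pow_add]
            ring
          have hdet : ∀ j, (X : ℂ⟦X⟧) ^ (e + m) ∣ A.det * (u j - u' j) := by
            intro j
            have h1 : A.adjugate.mulVec (A.mulVec fun j' => u j' - u' j') j
                = A.det * (u j - u' j) := by
              rw [Matrix.mulVec_mulVec, Matrix.adjugate_mul, Matrix.smul_mulVec,
                Matrix.one_mulVec]
              rfl
            rw [← h1]
            simp only [Matrix.mulVec, dotProduct]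
            exact Finset.dvd_sum fun i _ => (hAd i).mul_left _
          intro j
          obtain ⟨g, hg⟩ := hdet j
          rw [hc] at hg
          have hcg : c * (u j - u' j) = (X : ℂ⟦X⟧) ^ (e + m - k) * g := by
            apply cancel_X_pow (a := k)
            rw [← mul_assoc, hg]
            have hxp : (X : ℂ⟦X⟧) ^ (e + m) = X ^ k * X ^ (e + m - k) := by
              rw [← pow_add]
              congr 1
              omega
            rw [hxp]
            ring
          have hdvd3 : (X : ℂ⟦X⟧) ^ (m + 1) ∣ c * (u j - u' j) := by
            rw [hcg]
            exact (pow_dvd_pow _ (by omega)).mul_right _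
          have hfin : u j - u' j = cuInv * (c * (u j - u' j)) := by
            rw [← mul_assoc, hcc, one_mul]
          rw [hfin]
          exact hdvd3.mul_left _
    funext j
    have hz : u j - u' j = 0 := by
      refine PowerSeries.ext fun p => ?_
      have := PowerSeries.X_pow_dvd_iff.mp (hdvdall (p + 1) j) p (by omega)
      rw [this, map_zero]
    have := sub_eq_zero.mp hz
    exact this
  -- conclusion
  refine ⟨ulim, ?_, ?_⟩
  · intro i
    have h0 := hfinal i
    simp only [hHm] at h0
    linear_combination h0
  · intro u' hu'
    refine uniq u' ulim ?_ (fun i => hfinal i)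
    intro i
    simp only [hHm]
    rw [hu' i]
    ring
end
end

section
/- Let A be an n×n matrix over ℂ[[t]] with ord_t(det A) = k for some natural number k. Then the ℂ-vector space { ū ∈ (ℂ[[t]]/(t^k))^n : A·ū = 0 in (ℂ[[t]]/(t^k))^n } has dimension exactly k over ℂ. -/
set_option synthInstance.maxHeartbeats 1000000
set_option maxHeartbeats 1000000

open PowerSeries

section Aux

/-- ℂ-linear equiv of `ℂ[[X]] ⧸ (X^m)` with `ℂ^m`. -/
noncomputable def quotXpowEquiv (m : ℕ) :
    (PowerSeries ℂ ⧸ (Ideal.span {(X : PowerSeries ℂ) ^ m})) ≃ₗ[ℂ] (Fin m → ℂ) := by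
  set φ : PowerSeries ℂ →ₗ[ℂ] (Fin m → ℂ) := LinearMap.pi (fun i => PowerSeries.coeff (i : ℕ))
  have hker : LinearMap.ker φ = (Ideal.span {(X : PowerSeries ℂ) ^ m}).restrictScalars ℂ := by
    ext f
    simp only [LinearMap.mem_ker, Submodule.restrictScalars_mem, Ideal.mem_span_singleton,
      PowerSeries.X_pow_dvd_iff, funext_iff, LinearMap.pi_apply, Pi.zero_apply]
    constructor
    · intro h i hi; exact h ⟨i, hi⟩
    · intro h i; exact h i i.2
  have hsurj : Function.Surjective φ := by
    intro c
    refine ⟨PowerSeries.mk (fun j => if h : j < m then c ⟨j, h⟩ else 0), ?_⟩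
    funext i
    simp [φ, PowerSeries.coeff_mk, i.2]
  exact (Submodule.Quotient.restrictScalarsEquiv ℂ _).symm.trans
    ((Submodule.quotEquivOfEq _ _ hker.symm).trans (φ.quotKerEquivOfSurjective hsurj))

theorem finrank_quotXpow (m : ℕ) :
    Module.finrank ℂ (PowerSeries ℂ ⧸ (Ideal.span {(X : PowerSeries ℂ) ^ m})) = m := by
  rw [LinearEquiv.finrank_eq (quotXpowEquiv m), Module.finrank_pi, Fintype.card_fin]

theorem self_eq_X_pow_order_mul_divided_by_X_pow_order {f : PowerSeries ℂ} (hf : f ≠ 0) :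
    X ^ (f.order.lift (PowerSeries.order_finite_iff_ne_zero.mpr hf)) * divXPowOrder f = f := by
  conv_rhs => rw [← X_pow_order_mul_divXPowOrder (f := f)]
  congr 2
  rw [← ENat.coe_inj, ENat.coe_lift, ENat.coe_toNat (PowerSeries.order_finite_iff_ne_zero.mpr hf).ne]

theorem span_eq_span_Xpow {a : PowerSeries ℂ} (ha : a ≠ 0) :
    Ideal.span {a} = Ideal.span {(X : PowerSeries ℂ) ^
      ((a.order).lift (PowerSeries.order_finite_iff_ne_zero.mpr ha))} := by
  rw [Ideal.span_singleton_eq_span_singleton]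
  refine (Associated.symm ⟨Unit_of_divided_by_X_pow_order a, ?_⟩)
  rw [Unit_of_divided_by_X_pow_order_nonzero ha]
  exact self_eq_X_pow_order_mul_divided_by_X_pow_order ha

theorem order_prod {ι : Type*} (s : Finset ι) (f : ι → PowerSeries ℂ) :
    (∏ i ∈ s, f i).order = ∑ i ∈ s, (f i).order := by
  classical
  induction s using Finset.induction with
  | empty => simp
  | insert _ _ h ih => simp [Finset.prod_insert h, Finset.sum_insert h, PowerSeries.order_mul, ih]

noncomputable def snfQuotientEquiv {R M ι : Type*} [CommRing R] [AddCommGroup M] [Module R M]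
    [Fintype ι] [DecidableEq ι] (N : Submodule R M) (bM : Module.Basis ι R M) (bN : Module.Basis ι R N)
    (a : ι → R) (h : ∀ i, (bN i : M) = a i • bM i) :
    (M ⧸ N) ≃ₗ[R] Π i, R ⧸ Ideal.span {a i} := by
  have mem_N_iff : ∀ x, x ∈ N ↔ ∀ i, a i ∣ bM.repr x i := by
    intro x
    constructor
    · intro hx
      have : x = ∑ i, bN.repr ⟨x, hx⟩ i • (a i • bM i) := by
        simp_rw [← h]
        exact_mod_cast congrArg (Submodule.subtype N) (bN.sum_repr ⟨x, hx⟩).symm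
      intro i
      rw [this]
      refine ⟨bN.repr ⟨x, hx⟩ i, ?_⟩
      simp only [map_sum, ← mul_smul, map_smul]
      rw [Finset.sum_apply']
      simp [Module.Basis.repr_self, Finsupp.single_apply, mul_comm]
    · intro hdvd
      choose c hc using hdvd
      have : x = ∑ i, c i • (bN i : M) := by
        simp_rw [h, ← mul_smul]
        conv_lhs => rw [← bM.sum_repr x]
        refine Finset.sum_congr rfl fun i _ => ?_
        rw [hc i, mul_comm]
      rw [this]
      exact Submodule.sum_mem N fun i _ => Submodule.smul_mem N _ (bN i).2
  let I' : Submodule R (ι → R) := Submodule.pi Set.univ fun i => Ideal.span {a i}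
  have hmap : Submodule.map (bM.equivFun : M →ₗ[R] ι → R) N = I' := by
    ext x
    simp only [I', Submodule.mem_map, Submodule.mem_pi, Ideal.mem_span_singleton, Set.mem_univ,
      forall_true_left, LinearEquiv.coe_coe, Module.Basis.equivFun_apply]
    constructor
    · rintro ⟨y, hy, rfl⟩ i
      exact (mem_N_iff y).mp hy i
    · intro hdvd
      refine ⟨∑ i, x i • bM i, (mem_N_iff _).mpr fun i => ?_, ?_⟩ <;> rw [bM.repr_sum_self]
      · exact hdvd i
  exact (Submodule.Quotient.equiv N I' bM.equivFun hmap).trans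
    (Submodule.quotientPi (fun i => (Ideal.span {a i} : Submodule R R)))

variable {R : Type*} [CommRing R] [IsDomain R] [IsPrincipalIdealRing R]

omit [IsPrincipalIdealRing R] in
theorem mulVecLin_injective_of_det_ne_zero {n : ℕ} (A : Matrix (Fin n) (Fin n) R)
    (hdet : A.det ≠ 0) : Function.Injective A.mulVecLin := by
  rw [← LinearMap.ker_eq_bot, eq_bot_iff]
  intro x hx
  simp only [LinearMap.mem_ker, Matrix.mulVecLin_apply] at hx
  have h1 : A.det • x = 0 := by
    calc A.det • x = (A.det • (1 : Matrix (Fin n) (Fin n) R)).mulVec x := by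
          rw [Matrix.smul_mulVec, Matrix.one_mulVec]
      _ = (A.adjugate * A).mulVec x := by rw [Matrix.adjugate_mul]
      _ = A.adjugate.mulVec (A.mulVec x) := by rw [← Matrix.mulVec_mulVec]
      _ = 0 := by rw [hx, Matrix.mulVec_zero]
  simp only [Submodule.mem_bot]
  funext i
  have := congrFun h1 i
  simp only [Pi.smul_apply, smul_eq_mul, Pi.zero_apply] at this
  exact (mul_eq_zero.mp this).resolve_left hdet

omit [IsDomain R] [IsPrincipalIdealRing R] in
theorem isUnit_det_toMatrix_equiv {M1 M2 : Type*} [AddCommGroup M1] [Module R M1]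
    [AddCommGroup M2] [Module R M2] {ι : Type*} [Fintype ι] [DecidableEq ι]
    (b1 : Module.Basis ι R M1) (b2 : Module.Basis ι R M2) (e : M1 ≃ₗ[R] M2) :
    IsUnit (LinearMap.toMatrix b1 b2 (e : M1 →ₗ[R] M2)).det := by
  apply IsUnit.of_mul_eq_one (LinearMap.toMatrix b2 b1 (e.symm : M2 →ₗ[R] M1)).det
  rw [← Matrix.det_mul, ← LinearMap.toMatrix_comp b2 b1 b2]
  have : (e : M1 →ₗ[R] M2).comp (e.symm : M2 →ₗ[R] M1) = LinearMap.id := by ext x; simp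
  rw [this, LinearMap.toMatrix_id, Matrix.det_one]

theorem exists_snf_data {n : ℕ} (A : Matrix (Fin n) (Fin n) R) (hdet : A.det ≠ 0) :
    ∃ (bM : Module.Basis (Fin n) R (Fin n → R))
      (bN : Module.Basis (Fin n) R (LinearMap.range A.mulVecLin)) (a : Fin n → R),
      (∀ i, (bN i : Fin n → R) = a i • bM i) ∧ Associated (∏ i, a i) A.det := by
  classical
  set N := LinearMap.range A.mulVecLin with hN
  have inj : Function.Injective A.mulVecLin := mulVecLin_injective_of_det_ne_zero A hdet
  let eq1 : (Fin n → R) ≃ₗ[R] N := LinearEquiv.ofInjective A.mulVecLin inj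
  obtain ⟨n', snf⟩ := Submodule.smithNormalForm (Pi.basisFun R (Fin n)) N
  obtain ⟨bM, bN, f, a, hsnf⟩ := snf
  have hn : n' = n := by
    have h1 : Module.finrank R N = n' := by
      rw [Module.finrank_eq_card_basis bN, Fintype.card_fin]
    have h2 : Module.finrank R N = n := by
      rw [← LinearEquiv.finrank_eq eq1, Module.finrank_pi, Fintype.card_fin]
    omega
  subst hn
  have hfbij : Function.Bijective f := (Finite.injective_iff_bijective).mp f.injective
  let e : Fin n' ≃ Fin n' := Equiv.ofBijective f hfbij
  let bN' : Module.Basis (Fin n') R N := bN.reindex e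
  let a' : Fin n' → R := a ∘ e.symm
  have h' : ∀ i, (bN' i : Fin n' → R) = a' i • bM i := by
    intro i
    have : (bN (e.symm i) : Fin n' → R) = a (e.symm i) • bM (f (e.symm i)) := hsnf _
    rw [show f (e.symm i) = i from e.apply_symm_apply i] at this
    simpa [bN', a', Module.Basis.reindex_apply] using this
  refine ⟨bM, bN', a', h', ?_⟩
  -- determinant computation
  let b0 := Pi.basisFun R (Fin n')
  have hcomp : A.mulVecLin = (LinearMap.id.comp N.subtype).comp
      (eq1 : (Fin n' → R) →ₗ[R] N) := by
    ext x j
    simp only [LinearMap.comp_apply, LinearMap.id_apply, Submodule.coe_subtype,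
      LinearEquiv.coe_coe, eq1]
    rw [LinearEquiv.ofInjective_apply]
  have hA : A = LinearMap.toMatrix b0 b0 A.mulVecLin := by
    rw [LinearMap.toMatrix_eq_toMatrix', ← Matrix.toLin'_apply' A, LinearMap.toMatrix'_toLin']
  have hdiag : LinearMap.toMatrix bN' bM N.subtype = Matrix.diagonal a' := by
    ext i j
    rw [LinearMap.toMatrix_apply, Submodule.coe_subtype, h' j, map_smul, Module.Basis.repr_self]
    by_cases hij : i = j
    · subst hij; simp [Matrix.diagonal]
    · simp [Matrix.diagonal, hij, Finsupp.single_apply, Ne.symm hij]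
  obtain ⟨u1, hu1⟩ := isUnit_det_toMatrix_equiv bM b0 (LinearEquiv.refl R (Fin n' → R))
  obtain ⟨u2, hu2⟩ := isUnit_det_toMatrix_equiv b0 bN' eq1
  have hrefl : (LinearEquiv.refl R (Fin n' → R) : (Fin n' → R) →ₗ[R] (Fin n' → R))
      = LinearMap.id := rfl
  have hdet2 : A.det = (∏ i, a' i) * (u2 * u1) := by
    conv_lhs => rw [hA, hcomp, LinearMap.toMatrix_comp b0 bN' b0, Matrix.det_mul,
      LinearMap.toMatrix_comp bN' bM b0, Matrix.det_mul, hdiag, Matrix.det_diagonal]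
    rw [← hrefl, hu1, hu2]
    ring
  exact ⟨u2 * u1, hdet2.symm⟩

theorem LinearMap.range_restrictScalars' (R : Type*) {S M N : Type*} [Semiring R] [Semiring S]
    [SMul R S] [AddCommMonoid M] [Module R M] [Module S M] [IsScalarTower R S M]
    [AddCommMonoid N] [Module R N] [Module S N] [IsScalarTower R S N] (f : M →ₗ[S] N) :
    LinearMap.range (f.restrictScalars R) = (LinearMap.range f).restrictScalars R :=
  rfl

end Aux


set_option maxHeartbeats 400000000

/-- For an `n × n` matrix `A` over `ℂ[[t]]` with `ord_t (det A) = k < ∞`,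
the `ℂ`-vector space `{ū ∈ (ℂ[[t]]/(t^k))^n : A·ū = 0}` — the kernel of multiplication by
the reduction of `A` mod `t^k` — has dimension exactly `k` over `ℂ`. -/
theorem stmt_1 (n k : ℕ) (A : Matrix (Fin n) (Fin n) (PowerSeries ℂ))
    (hA : A.det.order = (k : ℕ∞)) :
    Module.finrank ℂ
      (LinearMap.ker
        (((A.map (Ideal.Quotient.mk
            (Ideal.span {(PowerSeries.X : PowerSeries ℂ) ^ k}))).mulVecLin).restrictScalars ℂ))
      = k := by
  classical
  set I : Ideal (PowerSeries ℂ) := Ideal.span {(X : (PowerSeries ℂ)) ^ k} with hI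
  set q := Ideal.Quotient.mk I with hq
  set Ab := A.map q with hAb
  set L := (Ab.mulVecLin).restrictScalars ℂ with hL
  have hdet : A.det ≠ 0 := by
    intro h
    rw [h, PowerSeries.order_zero] at hA
    exact (ENat.coe_ne_top k) hA.symm
  -- finite dimensionality of Q := (PowerSeries ℂ) ⧸ I
  haveI hfinQ : FiniteDimensional ℂ ((PowerSeries ℂ) ⧸ I) :=
    Module.Finite.equiv (quotXpowEquiv k).symm
  have hQ : Module.finrank ℂ ((PowerSeries ℂ) ⧸ I) = k := finrank_quotXpow k
  -- SNF data
  set N := LinearMap.range A.mulVecLin with hN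
  obtain ⟨bM, bN, a, hab, hassoc⟩ := exists_snf_data A hdet
  have ha_ne : ∀ i, a i ≠ 0 := by
    intro i hi
    rw [← hassoc.ne_zero_iff] at hdet
    exact hdet (Finset.prod_eq_zero (Finset.mem_univ i) hi)
  -- the coker equivalence
  set π : (Fin n → (PowerSeries ℂ)) →ₗ[(PowerSeries ℂ)] (Fin n → (PowerSeries ℂ) ⧸ I) :=
    LinearMap.pi (fun i => I.mkQ.comp (LinearMap.proj i)) with hπ
  have hπ_apply : ∀ (x : Fin n → (PowerSeries ℂ)) (i : Fin n), π x i = q (x i) := by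
    intro x i; rfl
  have hπmul : ∀ y : Fin n → (PowerSeries ℂ), π (A.mulVec y) = Ab.mulVec (π y) := by
    intro y
    funext i
    rw [hπ_apply]
    simp only [Matrix.mulVec, dotProduct, map_sum, hAb, Matrix.map_apply]
    refine Finset.sum_congr rfl fun j _ => ?_
    rw [map_mul, hπ_apply]
  have hπsurj : Function.Surjective π := by
    intro v
    choose y hy using fun i => Ideal.Quotient.mk_surjective (I := I) (v i)
    exact ⟨y, funext fun i => by rw [hπ_apply, hy]⟩
  set P : Submodule ((PowerSeries ℂ) ⧸ I) (Fin n → (PowerSeries ℂ) ⧸ I) := LinearMap.range Ab.mulVecLin with hP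
  set ψ : (Fin n → (PowerSeries ℂ)) →ₗ[(PowerSeries ℂ)] ((Fin n → (PowerSeries ℂ) ⧸ I) ⧸ P) :=
    (P.mkQ.restrictScalars (PowerSeries ℂ)).comp π with hψ
  have hψsurj : Function.Surjective ψ :=
    (P.mkQ_surjective).comp hπsurj
  have hkerψ : LinearMap.ker ψ = N := by
    ext x
    simp only [hψ, LinearMap.mem_ker, LinearMap.comp_apply, LinearMap.restrictScalars_apply,
      Submodule.Quotient.mk_eq_zero P, Submodule.mkQ_apply]
    constructor
    · rintro hx
      obtain ⟨v, hv⟩ := hx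
      obtain ⟨y, rfl⟩ := hπsurj v
      -- x - A.mulVec y maps to 0 under π
      have hd : ∀ i, (X : (PowerSeries ℂ)) ^ k ∣ (x - A.mulVec y) i := by
        intro i
        have : π (x - A.mulVec y) i = 0 := by
          rw [Matrix.mulVecLin_apply] at hv
          rw [map_sub, hπmul, hv, sub_self]; rfl
        rw [hπ_apply] at this
        rw [← Ideal.mem_span_singleton (α := (PowerSeries ℂ)), ← hI]
        exact (Ideal.Quotient.eq_zero_iff_mem).mp this
      choose z hz using hd
      -- X^k • z ∈ N via adjugate
      set u := Unit_of_divided_by_X_pow_order A.det with hu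
      have horder : (A.det.order).lift (PowerSeries.order_finite_iff_ne_zero.mpr hdet) = k := by
        simp [hA]
      have hdetfac : A.det = (X : (PowerSeries ℂ)) ^ k * (u : (PowerSeries ℂ)) := by
        rw [hu, Unit_of_divided_by_X_pow_order_nonzero hdet, ← horder]
        exact (self_eq_X_pow_order_mul_divided_by_X_pow_order hdet).symm
      have hXkz : A.mulVec ((u⁻¹ : (PowerSeries ℂ)ˣ) • (A.adjugate.mulVec z)) = (X : (PowerSeries ℂ)) ^ k • z := by
        rw [Matrix.mulVec_smul, Matrix.mulVec_mulVec, Matrix.mul_adjugate, hdetfac,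
          Matrix.smul_mulVec, Matrix.one_mulVec, Units.smul_def, smul_smul,
          mul_comm ((X : (PowerSeries ℂ)) ^ k), ← mul_assoc, Units.inv_mul, one_mul]
      have hx2 : x = A.mulVec (y + (u⁻¹ : (PowerSeries ℂ)ˣ) • (A.adjugate.mulVec z)) := by
        rw [Matrix.mulVec_add, hXkz]
        funext i
        simp only [Pi.add_apply, Pi.smul_apply, smul_eq_mul]
        have := hz i
        rw [Pi.sub_apply] at this
        linear_combination this
      exact ⟨_, hx2.symm⟩
    · rintro ⟨y, rfl⟩
      exact ⟨π y, (hπmul y).symm⟩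
  -- assemble equivalences
  have E2 : ((Fin n → (PowerSeries ℂ) ⧸ I) ⧸ P) ≃ₗ[(PowerSeries ℂ)] ((Fin n → (PowerSeries ℂ)) ⧸ N) :=
    ((Submodule.quotEquivOfEq _ _ hkerψ.symm).trans
      (ψ.quotKerEquivOfSurjective hψsurj)).symm
  have E3 : ((Fin n → (PowerSeries ℂ)) ⧸ N) ≃ₗ[(PowerSeries ℂ)] Π i, (PowerSeries ℂ) ⧸ Ideal.span {a i} :=
    snfQuotientEquiv N bM bN a hab
  -- order bookkeeping
  have horda : (∑ i, ((a i).order.lift (PowerSeries.order_finite_iff_ne_zero.mpr (ha_ne i)))) = k := by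
    have h1 : (∏ i, a i).order = (k : ℕ∞) := by
      obtain ⟨w, hw⟩ := hassoc
      rw [← hA, ← hw, PowerSeries.order_mul, PowerSeries.order_zero_of_unit w.isUnit, add_zero]
    rw [order_prod] at h1
    have h2 : ∀ i, (a i).order =
        (((a i).order.lift (PowerSeries.order_finite_iff_ne_zero.mpr (ha_ne i)) : ℕ) : ℕ∞) := by
      intro i
      exact (ENat.coe_lift _ _).symm
    rw [Finset.sum_congr rfl (fun i _ => h2 i)] at h1
    rw [← Nat.cast_sum] at h1
    exact_mod_cast h1
  -- finite dimensionality of each factor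
  haveI hfd : ∀ i : Fin n, FiniteDimensional ℂ ((PowerSeries ℂ) ⧸ Ideal.span {a i}) := by
    intro i
    rw [span_eq_span_Xpow (ha_ne i)]
    exact Module.Finite.equiv (quotXpowEquiv _).symm
  have hfr : ∀ i : Fin n, Module.finrank ℂ ((PowerSeries ℂ) ⧸ Ideal.span {a i})
      = (a i).order.lift (PowerSeries.order_finite_iff_ne_zero.mpr (ha_ne i)) := by
    intro i
    rw [span_eq_span_Xpow (ha_ne i)]
    exact finrank_quotXpow _
  -- finrank of the product
  have hprod : Module.finrank ℂ (Π i, (PowerSeries ℂ) ⧸ Ideal.span {a i}) = k := by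
    rw [Module.finrank_pi_fintype, Finset.sum_congr rfl (fun i _ => hfr i), horda]
  -- transfer across the (PowerSeries ℂ)-linear equivalences
  have hcoker : Module.finrank ℂ ((Fin n → (PowerSeries ℂ) ⧸ I) ⧸ P) = k := by
    rw [LinearEquiv.finrank_eq ((E2.trans E3).restrictScalars ℂ), hprod]
  -- rank-nullity
  haveI : FiniteDimensional ℂ (Fin n → (PowerSeries ℂ) ⧸ I) := inferInstance
  have hrange : LinearMap.range L = P.restrictScalars ℂ :=
    LinearMap.range_restrictScalars' ℂ Ab.mulVecLin
  have hrn := LinearMap.finrank_range_add_finrank_ker L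
  have hqt := Submodule.finrank_quotient_add_finrank (P.restrictScalars ℂ)
  have hqeq : Module.finrank ℂ ((Fin n → (PowerSeries ℂ) ⧸ I) ⧸ P.restrictScalars ℂ)
      = Module.finrank ℂ ((Fin n → (PowerSeries ℂ) ⧸ I) ⧸ P) :=
    LinearEquiv.finrank_eq (Submodule.Quotient.restrictScalarsEquiv ℂ P)
  rw [hrange] at hrn
  rw [hqeq, hcoker] at hqt
  omega
end

section
/- Let G be a group (or monoid) and let V, W be finite-dimensional semisimple representations of G over a field k of characteristic zero. If tr(g; V) = tr(g; W) for every g ∈ G, then V and W are isomorphic as representations of G. -/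
open LinearMap Module Submodule

section BrauerNesbittCore

variable (k : Type*) [Field k] (B : Type*) [Ring B] [Algebra k B]

/-- The action of `e : B` as a `k`-linear endomorphism of a `B`-module. -/
private def actEnd (P : Type*) [AddCommGroup P] [Module k P] [Module B P] [IsScalarTower k B P]
    (e : B) : P →ₗ[k] P where
  toFun p := e • p
  map_add' := smul_add e
  map_smul' c p := by
    simp only [RingHom.id_apply]
    rw [← algebraMap_smul B c p, ← algebraMap_smul B c (e • p), smul_smul, smul_smul,
      Algebra.commutes]

@[simp] private lemma actEnd_apply {P : Type*} [AddCommGroup P] [Module k P] [Module B P]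
    [IsScalarTower k B P] (e : B) (p : P) : actEnd k B P e p = e • p := rfl

/-- In a semisimple ring, every simple module is a retract of `B`. -/
private lemma exists_section [IsSemisimpleRing B] (S : Type*) [AddCommGroup S] [Module B S]
    [IsSimpleModule B S] :
    ∃ (s : S) (σ : S →ₗ[B] B), s ≠ 0 ∧ ∀ x, σ x • s = x := by
  have := IsSimpleModule.nontrivial B S
  obtain ⟨s, hs⟩ := exists_ne (0 : S)
  set f : B →ₗ[B] S := LinearMap.toSpanSingleton B S s with hf
  have hfs : Function.Surjective f := IsSimpleModule.toSpanSingleton_surjective B hs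
  obtain ⟨I, hI⟩ := exists_isCompl (LinearMap.ker f)
  set g : I →ₗ[B] S := f ∘ₗ I.subtype with hg
  have hginj : Function.Injective g := by
    intro x y hxy
    have : (x : B) - y ∈ LinearMap.ker f := by
      simp only [LinearMap.mem_ker, map_sub]
      simpa [hg, sub_eq_zero] using hxy
    have h2 : (x : B) - y ∈ I := sub_mem x.2 y.2
    have := hI.symm.disjoint.le_bot ⟨h2, this⟩
    exact Subtype.ext (by simpa [sub_eq_zero] using this)
  have hgsurj : Function.Surjective g := by
    intro y
    obtain ⟨b, hb⟩ := hfs y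
    have : b ∈ LinearMap.ker f ⊔ I := by rw [hI.sup_eq_top]; trivial
    obtain ⟨c, hc, d, hd, rfl⟩ := Submodule.mem_sup.mp this
    refine ⟨⟨d, hd⟩, ?_⟩
    have : f c = 0 := hc
    simp only [hg, LinearMap.comp_apply, Submodule.coe_subtype]
    rw [← hb, map_add, this, zero_add]
  set eqv := LinearEquiv.ofBijective g ⟨hginj, hgsurj⟩
  refine ⟨s, I.subtype ∘ₗ (eqv.symm : S →ₗ[B] I), hs, fun x => ?_⟩
  have : ∀ b : B, b • s = f b := fun b => rfl
  rw [this]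
  show f (I.subtype (eqv.symm x)) = x
  have : f (I.subtype (eqv.symm x)) = g (eqv.symm x) := rfl
  rw [this]
  exact eqv.apply_symm_apply x

variable {P Q : Type*} [AddCommGroup P] [Module k P] [Module B P] [IsScalarTower k B P]
  [AddCommGroup Q] [Module k Q] [Module B Q] [IsScalarTower k B Q]

private lemma rank_actEnd_congr (φ : P ≃ₗ[B] Q) (e : B) :
    finrank k (LinearMap.range (actEnd k B P e)) =
      finrank k (LinearMap.range (actEnd k B Q e)) := by
  let φk : P ≃ₗ[k] Q := φ.restrictScalars k
  have h : LinearMap.range (actEnd k B Q e) =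
      Submodule.map (φk : P →ₗ[k] Q) (LinearMap.range (actEnd k B P e)) := by
    ext y
    simp only [LinearMap.mem_range, Submodule.mem_map, actEnd_apply]
    constructor
    · rintro ⟨q, rfl⟩
      exact ⟨e • φ.symm q, ⟨φ.symm q, rfl⟩, by
        show φ (e • φ.symm q) = e • q
        rw [map_smul, φ.apply_symm_apply]⟩
    · rintro ⟨x, ⟨p, rfl⟩, rfl⟩
      exact ⟨φ p, by show e • φ p = φ (e • p); rw [map_smul]⟩
  rw [h]
  exact (LinearEquiv.finrank_map_eq φk _).symm

private lemma rank_actEnd_submodule (X : Submodule B P) (e : B) :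
    finrank k (LinearMap.range (actEnd k B X e)) =
      finrank k (Submodule.map (actEnd k B P e) (X.restrictScalars k)) := by
  have h : Submodule.map (actEnd k B P e) (X.restrictScalars k) =
      Submodule.map (X.restrictScalars k).subtype (LinearMap.range (actEnd k B X e)) := by
    ext y
    simp only [Submodule.mem_map, LinearMap.mem_range, actEnd_apply,
      Submodule.restrictScalars_mem, Submodule.coe_subtype]
    constructor
    · rintro ⟨x, hx, rfl⟩
      exact ⟨e • (⟨x, hx⟩ : X), ⟨⟨x, hx⟩, rfl⟩, rfl⟩
    · rintro ⟨x, ⟨p, rfl⟩, rfl⟩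
      exact ⟨(p : P), p.2, rfl⟩
  rw [h, Submodule.finrank_map_subtype_eq]
  rfl

private lemma isCompl_restrictScalars {X Y : Submodule B P} (h : IsCompl X Y) :
    IsCompl (X.restrictScalars k) (Y.restrictScalars k) := by
  constructor
  · rw [disjoint_iff, eq_bot_iff]
    intro x hx
    have := h.disjoint.le_bot (⟨hx.1, hx.2⟩ : x ∈ X ⊓ Y)
    simpa using this
  · rw [codisjoint_iff, eq_top_iff]
    intro p _
    have : p ∈ X ⊔ Y := by rw [h.sup_eq_top]; trivial
    obtain ⟨x, hx, y, hy, rfl⟩ := Submodule.mem_sup.mp this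
    exact Submodule.mem_sup.mpr ⟨x, hx, y, hy, rfl⟩

private lemma rank_actEnd_add [FiniteDimensional k P] {X Y : Submodule B P} (h : IsCompl X Y)
    (e : B) :
    finrank k (LinearMap.range (actEnd k B P e)) =
      finrank k (Submodule.map (actEnd k B P e) (X.restrictScalars k)) +
      finrank k (Submodule.map (actEnd k B P e) (Y.restrictScalars k)) := by
  have htop : (⊤ : Submodule k P) = X.restrictScalars k ⊔ Y.restrictScalars k :=
    ((isCompl_restrictScalars k B h).sup_eq_top).symm
  have h1 : LinearMap.range (actEnd k B P e) =
      Submodule.map (actEnd k B P e) (X.restrictScalars k) ⊔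
      Submodule.map (actEnd k B P e) (Y.restrictScalars k) := by
    rw [← Submodule.map_sup, ← htop, Submodule.map_top]
  have hdis : Submodule.map (actEnd k B P e) (X.restrictScalars k) ⊓
      Submodule.map (actEnd k B P e) (Y.restrictScalars k) = ⊥ := by
    rw [eq_bot_iff]
    intro z hz
    obtain ⟨⟨x, hx, rfl⟩, hz2⟩ := hz
    obtain ⟨y, hy, hyz⟩ := hz2
    have hzX : (e : B) • x ∈ X := X.smul_mem e hx
    have hzY : (e : B) • x ∈ Y := by
      have hxy : (e : B) • x = e • y := hyz.symm
      rw [hxy]; exact Y.smul_mem e hy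
    have := h.disjoint.le_bot (⟨hzX, hzY⟩ : (e : B) • x ∈ X ⊓ Y)
    simpa using this
  have := Submodule.finrank_sup_add_finrank_inf_eq
    (Submodule.map (actEnd k B P e) (X.restrictScalars k))
    (Submodule.map (actEnd k B P e) (Y.restrictScalars k))
  rw [hdis, finrank_bot] at this
  rw [h1]
  omega

/-- From a simple submodule, produce an idempotent with useful properties. -/
private lemma exists_idem_bn (B : Type*) [Ring B] [IsSemisimpleRing B] {P : Type*} [AddCommGroup P]
    [Module B P] (S : Submodule B P) [IsSimpleModule B S] :
    ∃ (e : B) (s : S) (σ : S →ₗ[B] B), e * e = e ∧ (s : P) ≠ 0 ∧ σ s = e ∧ ∀ x, σ x • s = x := by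
  obtain ⟨s, σ, hs, hσ⟩ := exists_section B S
  refine ⟨σ s, s, σ, ?_, by simpa using hs, rfl, hσ⟩
  have h1 : σ (σ s • s) = σ s • σ s := map_smul σ (σ s) s
  rw [hσ s, smul_eq_mul] at h1
  exact h1.symm

private lemma rank_actEnd_pos [IsSemisimpleRing B] [FiniteDimensional k P] {S : Submodule B P}
    [IsSimpleModule B S] {e : B} {s : S} {σ : S →ₗ[B] B} (hs : (s : P) ≠ 0) (hσe : σ s = e)
    (hσ : ∀ x, σ x • s = x) :
    0 < finrank k (LinearMap.range (actEnd k B P e)) := by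
  have hmem : (s : P) ∈ LinearMap.range (actEnd k B P e) := by
    refine ⟨(s : P), ?_⟩
    rw [actEnd_apply]
    have : e • (s : S) = s := by rw [← hσe]; exact hσ s
    calc e • (s : P) = ((e • s : S) : P) := rfl
    _ = (s : P) := by rw [this]
  have : Nontrivial (LinearMap.range (actEnd k B P e)) :=
    ⟨⟨⟨(s : P), hmem⟩, 0, fun hc => hs (congrArg Subtype.val hc)⟩⟩
  exact Module.finrank_pos

private theorem brauer_core [IsSemisimpleRing B] : ∀ (n : ℕ) (M : Type*) (N : Type*)
    [AddCommGroup M] [Module k M] [Module B M] [IsScalarTower k B M] [FiniteDimensional k M]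
    [AddCommGroup N] [Module k N] [Module B N] [IsScalarTower k B N] [FiniteDimensional k N],
    finrank k M = n →
    (∀ e : B, e * e = e →
      finrank k (LinearMap.range (actEnd k B M e)) =
        finrank k (LinearMap.range (actEnd k B N e))) →
    Nonempty (M ≃ₗ[B] N) := by
  intro n
  induction n using Nat.strong_induction_on with
  | _ n IH =>
  intro M N _ _ _ _ _ _ _ _ _ _ hn H
  rcases subsingleton_or_nontrivial N with hN | hN
  · rcases subsingleton_or_nontrivial M with hM | hM
    · exact ⟨LinearEquiv.ofSubsingleton M N⟩
    · exfalso
      obtain ⟨S, hS⟩ := IsSemisimpleModule.exists_simple_submodule B M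
      haveI := hS
      obtain ⟨e, s, σ, he, hs, hσe, hσ⟩ := exists_idem_bn B S
      have hpos := rank_actEnd_pos k B (P := M) hs hσe hσ
      rw [H e he] at hpos
      have : Subsingleton (LinearMap.range (actEnd k B N e)) := inferInstance
      rw [Module.finrank_zero_iff.mpr this] at hpos
      exact lt_irrefl 0 hpos
  · rcases subsingleton_or_nontrivial M with hM | hM
    · exfalso
      obtain ⟨T, hT⟩ := IsSemisimpleModule.exists_simple_submodule B N
      haveI := hT
      obtain ⟨e, t, σ, he, ht, hσe, hσ⟩ := exists_idem_bn B T
      have hpos := rank_actEnd_pos k B (P := N) ht hσe hσ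
      rw [← H e he] at hpos
      have : Subsingleton (LinearMap.range (actEnd k B M e)) := inferInstance
      rw [Module.finrank_zero_iff.mpr this] at hpos
      exact lt_irrefl 0 hpos
    obtain ⟨S, hS⟩ := IsSemisimpleModule.exists_simple_submodule B M
    haveI := hS
    obtain ⟨e, s, σ, he, hs, hσe, hσ⟩ := exists_idem_bn B S
    have hposM := rank_actEnd_pos k B (P := M) hs hσe hσ
    have hposN : 0 < finrank k (LinearMap.range (actEnd k B N e)) := by rwa [H e he] at hposM
    have hy : ∃ y : N, e • y ≠ 0 := by
      by_contra hc
      push_neg at hc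
      have : LinearMap.range (actEnd k B N e) = ⊥ := by
        rw [LinearMap.range_eq_bot]
        ext y; exact hc y
      rw [this, finrank_bot] at hposN
      exact lt_irrefl 0 hposN
    have hTex : ∃ T : Submodule B N, IsSimpleModule B T ∧ ∃ t ∈ T, e • t ≠ (0 : N) := by
      by_contra hc
      push_neg at hc
      obtain ⟨y, hy0⟩ := hy
      have hy' : y ∈ (⊤ : Submodule B N) := trivial
      rw [← IsSemisimpleModule.sSup_simples_eq_top B N, sSup_eq_iSup'] at hy'
      refine hy0 (Submodule.iSup_induction _ (motive := fun z => e • z = 0) hy' ?_ (smul_zero e) ?_)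
      · rintro ⟨T, hT2⟩ x hx
        exact hc T hT2 x hx
      · intro a b ha hb; rw [smul_add, ha, hb, add_zero]
    obtain ⟨T, hT, t, htT, het⟩ := hTex
    haveI := hT
    set t' : T := ⟨t, htT⟩ with ht'
    have θlin : ∀ (b : B) (x : S), σ (b • x) • t' = b • (σ x • t') := by
      intro b x
      rw [map_smul, smul_eq_mul, mul_smul]
    set θ : S →ₗ[B] T :=
      { toFun := fun x => σ x • t'
        map_add' := fun x y => by
          show σ (x + y) • t' = σ x • t' + σ y • t'
          rw [map_add, add_smul]
        map_smul' := fun b x => by simpa using θlin b x } with hθ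
    have hθne : θ ≠ 0 := by
      intro hzero
      apply het
      have h1 : θ s = 0 := by rw [hzero]; rfl
      have h2 : θ s = e • t' := by rw [hθ]; show σ s • t' = e • t'; rw [hσe]
      have : (e • t' : T) = 0 := by rw [← h2, h1]
      calc e • t = ((e • t' : T) : N) := rfl
      _ = 0 := by rw [this]; rfl
    obtain ⟨φ⟩ : Nonempty (S ≃ₗ[B] T) :=
      ⟨LinearEquiv.ofBijective θ (LinearMap.bijective_of_ne_zero hθne)⟩
    obtain ⟨M₁, hM₁⟩ := exists_isCompl S
    obtain ⟨N₁, hN₁⟩ := exists_isCompl T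
    haveI : FiniteDimensional k M₁ := inferInstanceAs (FiniteDimensional k (M₁.restrictScalars k))
    haveI : FiniteDimensional k N₁ := inferInstanceAs (FiniteDimensional k (N₁.restrictScalars k))
    haveI : FiniteDimensional k S := inferInstanceAs (FiniteDimensional k (S.restrictScalars k))
    have hSpos : 0 < finrank k (S.restrictScalars k) := by
      haveI : Nontrivial (S.restrictScalars k) := IsSimpleModule.nontrivial B S
      exact Module.finrank_pos
    have hadd : finrank k (S.restrictScalars k) + finrank k (M₁.restrictScalars k) = finrank k M :=
      Submodule.finrank_add_eq_of_isCompl (isCompl_restrictScalars k B hM₁)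
    have hlt : finrank k (M₁.restrictScalars k) < n := by omega
    have hlt' : finrank k M₁ < n := hlt
    have H' : ∀ e' : B, e' * e' = e' →
        finrank k (LinearMap.range (actEnd k B M₁ e')) =
          finrank k (LinearMap.range (actEnd k B N₁ e')) := by
      intro e' he'
      have h1 := rank_actEnd_add k B (P := M) hM₁ e'
      have h2 := rank_actEnd_add k B (P := N) hN₁ e'
      have h3 := H e' he'
      have h4 : finrank k (Submodule.map (actEnd k B M e') (S.restrictScalars k)) =
          finrank k (Submodule.map (actEnd k B N e') (T.restrictScalars k)) := by
        rw [← rank_actEnd_submodule, ← rank_actEnd_submodule]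
        exact rank_actEnd_congr k B φ e'
      rw [rank_actEnd_submodule k B (P := M) M₁ e', rank_actEnd_submodule k B (P := N) N₁ e']
      omega
    obtain ⟨ψ⟩ := IH (finrank k M₁) hlt' M₁ N₁ rfl H'
    exact ⟨((Submodule.prodEquivOfIsCompl S M₁ hM₁).symm.trans
      ((φ.prodCongr ψ).trans (Submodule.prodEquivOfIsCompl T N₁ hN₁)))⟩

end BrauerNesbittCore

section Transfer
variable {R : Type*} [Ring R]

private lemma pi_isSemisimpleModule {ι : Type*} [Finite ι] [DecidableEq ι] (φ : ι → Type*)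
    [∀ i, AddCommGroup (φ i)] [∀ i, Module R (φ i)] (h : ∀ i, IsSemisimpleModule R (φ i)) :
    IsSemisimpleModule R (∀ i, φ i) := by
  refine isSemisimpleModule_of_isSemisimpleModule_submodule'
    (p := fun i => LinearMap.range (LinearMap.single R φ i)) (fun i => ?_)
    (LinearMap.iSup_range_single R φ)
  haveI := h i
  exact IsSemisimpleModule.congr
    (LinearEquiv.ofInjective (LinearMap.single R φ i) (Pi.single_injective i)).symm

private lemma prod_isSemisimpleModule (P Q : Type*) [AddCommGroup P] [Module R P] [AddCommGroup Q]
    [Module R Q] [IsSemisimpleModule R P] [IsSemisimpleModule R Q] :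
    IsSemisimpleModule R (P × Q) := by
  refine isSemisimpleModule_of_isSemisimpleModule_submodule' (ι := Bool)
    (p := fun b => bif b then Submodule.fst R P Q else Submodule.snd R P Q) (fun i => ?_) ?_
  · cases i
    · exact IsSemisimpleModule.congr (Submodule.sndEquiv R P Q)
    · exact IsSemisimpleModule.congr (Submodule.fstEquiv R P Q)
  · rw [iSup_bool_eq]
    exact Submodule.fst_sup_snd R P Q

private lemma isSemisimpleRing_of_injective {P : Type*} [AddCommGroup P] [Module R P]
    [IsSemisimpleModule R P] (f : R →ₗ[R] P) (hf : Function.Injective f) :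
    IsSemisimpleRing R :=
  IsSemisimpleModule.congr (LinearEquiv.ofInjective f hf)

end Transfer

set_option maxHeartbeats 1000000 in
set_option synthInstance.maxHeartbeats 400000 in
/-- Brauer–Nesbitt in characteristic zero: two finite-dimensional
semisimple representations of a monoid `G` over a field `k` of characteristic zero
with equal characters are isomorphic as representations. Semisimplicity is phrased
as semisimplicity of the associated `MonoidAlgebra k G`-module. -/
theorem stmt_16 (k : Type*) [Field k] [CharZero k] (G : Type*) [Monoid G]
    (V W : Type*) [AddCommGroup V] [Module k V] [AddCommGroup W] [Module k W]
    [FiniteDimensional k V] [FiniteDimensional k W]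
    (ρ : Representation k G V) (σ : Representation k G W)
    (hρ : IsSemisimpleModule (MonoidAlgebra k G) ρ.asModule)
    (hσ : IsSemisimpleModule (MonoidAlgebra k G) σ.asModule)
    (htr : ∀ g : G, LinearMap.trace k V (ρ g) = LinearMap.trace k W (σ g)) :
    ∃ e : V ≃ₗ[k] W, ∀ (g : G) (v : V), e (ρ g v) = σ g (e v) := by
  classical
  set A := MonoidAlgebra k G with hA
  let M := ρ.asModule
  let N := σ.asModule
  haveI : FiniteDimensional k M := ‹FiniteDimensional k V›
  haveI : FiniteDimensional k N := ‹FiniteDimensional k W›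
  -- the combined algebra map
  let πM : A →ₐ[k] Module.End k M := ρ.asAlgebraHom
  let πN : A →ₐ[k] Module.End k N := σ.asAlgebraHom
  let χ : A →ₐ[k] (Module.End k M × Module.End k N) := πM.prod πN
  let B := χ.range
  letI instBM : Module B M := Module.compHom M ((RingHom.fst _ _).comp (B.val.toRingHom))
  letI instBN : Module B N := Module.compHom N ((RingHom.snd _ _).comp (B.val.toRingHom))
  haveI towM : IsScalarTower k B M := by
    constructor
    intro c b m
    show ((c • b : B) : Module.End k M × Module.End k N).1 m
      = c • ((b : Module.End k M × Module.End k N).1 m)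
    rw [Subalgebra.coe_smul]
    rfl
  haveI towN : IsScalarTower k B N := by
    constructor
    intro c b m
    show ((c • b : B) : Module.End k M × Module.End k N).2 m
      = c • ((b : Module.End k M × Module.End k N).2 m)
    rw [Subalgebra.coe_smul]
    rfl
  -- transfer semisimplicity along the surjection A → B
  let π : A →+* B := χ.rangeRestrict.toRingHom
  haveI : RingHomSurjective π := ⟨χ.rangeRestrict_surjective⟩
  let lM : M →ₛₗ[π] M :=
    { toFun := id, map_add' := fun _ _ => rfl, map_smul' := fun _ _ => rfl }
  let lN : N →ₛₗ[π] N :=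
    { toFun := id, map_add' := fun _ _ => rfl, map_smul' := fun _ _ => rfl }
  haveI hBM : IsSemisimpleModule B M :=
    (LinearMap.isSemisimpleModule_iff_of_bijective lM Function.bijective_id).mp hρ
  haveI hBN : IsSemisimpleModule B N :=
    (LinearMap.isSemisimpleModule_iff_of_bijective lN Function.bijective_id).mp hσ
  -- B is a semisimple ring, being a faithful subring of endomorphisms of M × N
  haveI hBss : IsSemisimpleRing B := by
    let bm := Module.finBasis k M
    let bn := Module.finBasis k N
    haveI h1 : IsSemisimpleModule B (Fin (finrank k M) → M) :=
      pi_isSemisimpleModule _ (fun _ => hBM)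
    haveI h2 : IsSemisimpleModule B (Fin (finrank k N) → N) :=
      pi_isSemisimpleModule _ (fun _ => hBN)
    haveI h3 : IsSemisimpleModule B
        ((Fin (finrank k M) → M) × (Fin (finrank k N) → N)) :=
      prod_isSemisimpleModule _ _
    let f : B →ₗ[B] ((Fin (finrank k M) → M) × (Fin (finrank k N) → N)) :=
      { toFun := fun b => (fun i => b • bm i, fun j => b • bn j)
        map_add' := fun b b' => by
          refine Prod.ext ?_ ?_ <;> funext i <;> exact add_smul b b' _
        map_smul' := fun b' b => by
          refine Prod.ext ?_ ?_ <;> funext i <;> exact mul_smul b' b _ }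
    refine isSemisimpleRing_of_injective f ?_
    intro b b' hbb'
    have h1 : ∀ i, b • bm i = b' • bm i :=
      fun i => congrFun (congrArg Prod.fst hbb') i
    have h2 : ∀ j, b • bn j = b' • bn j :=
      fun j => congrFun (congrArg Prod.snd hbb') j
    apply Subtype.ext
    apply Prod.ext
    · exact bm.ext h1
    · exact bn.ext h2
  -- characters agree on all of A
  have htrA : ∀ a : A,
      LinearMap.trace k M (ρ.asAlgebraHom a) = LinearMap.trace k N (σ.asAlgebraHom a) := by
    intro a
    have key : (LinearMap.trace k M) ∘ₗ (ρ.asAlgebraHom).toLinearMap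
        = (LinearMap.trace k N) ∘ₗ (σ.asAlgebraHom).toLinearMap := by
      apply MonoidAlgebra.lhom_ext'
      intro g
      apply LinearMap.ext
      intro r
      show LinearMap.trace k M (ρ.asAlgebraHom (MonoidAlgebra.single g r))
        = LinearMap.trace k N (σ.asAlgebraHom (MonoidAlgebra.single g r))
      rw [Representation.asAlgebraHom_single, Representation.asAlgebraHom_single]
      show LinearMap.trace k V (r • ρ g) = LinearMap.trace k W (r • σ g)
      rw [map_smul, map_smul]
      show r • LinearMap.trace k V (ρ g) = r • LinearMap.trace k W (σ g)
      rw [htr g]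
    exact DFunLike.congr_fun key a
  -- the rank hypothesis for the core theorem
  have H : ∀ e : B, e * e = e →
      finrank k (LinearMap.range (actEnd k B M e)) =
        finrank k (LinearMap.range (actEnd k B N e)) := by
    intro e he
    obtain ⟨a, ha⟩ := e.2
    have hM1 : actEnd k B M e = (e : Module.End k M × Module.End k N).1 := rfl
    have hN1 : actEnd k B N e = (e : Module.End k M × Module.End k N).2 := rfl
    have hcomp1 : (e : Module.End k M × Module.End k N).1 ∘ₗ
        (e : Module.End k M × Module.End k N).1 = (e : Module.End k M × Module.End k N).1 := by
      have : ((e * e : B) : Module.End k M × Module.End k N).1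
          = (e : Module.End k M × Module.End k N).1 := by rw [he]
      exact this
    have hcomp2 : (e : Module.End k M × Module.End k N).2 ∘ₗ
        (e : Module.End k M × Module.End k N).2 = (e : Module.End k M × Module.End k N).2 := by
      have : ((e * e : B) : Module.End k M × Module.End k N).2
          = (e : Module.End k M × Module.End k N).2 := by rw [he]
      exact this
    have hproj1 : LinearMap.IsProj (LinearMap.range (e : Module.End k M × Module.End k N).1)
        (e : Module.End k M × Module.End k N).1 := by
      refine ⟨fun x => ⟨x, rfl⟩, ?_⟩
      rintro x ⟨y, rfl⟩
      exact DFunLike.congr_fun hcomp1 y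
    have hproj2 : LinearMap.IsProj (LinearMap.range (e : Module.End k M × Module.End k N).2)
        (e : Module.End k M × Module.End k N).2 := by
      refine ⟨fun x => ⟨x, rfl⟩, ?_⟩
      rintro x ⟨y, rfl⟩
      exact DFunLike.congr_fun hcomp2 y
    have t1 := hproj1.trace
    have t2 := hproj2.trace
    have htr_e : LinearMap.trace k M (e : Module.End k M × Module.End k N).1
        = LinearMap.trace k N (e : Module.End k M × Module.End k N).2 := by
      have h1 : (e : Module.End k M × Module.End k N).1 = ρ.asAlgebraHom a := by
        rw [← ha]; rfl
      have h2 : (e : Module.End k M × Module.End k N).2 = σ.asAlgebraHom a := by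
        rw [← ha]; rfl
      rw [h1, h2]
      exact htrA a
    rw [t1, t2] at htr_e
    have := Nat.cast_injective (R := k) htr_e
    rw [hM1, hN1]
    exact this
  obtain ⟨F⟩ := brauer_core k B (finrank k M) M N rfl H
  refine ⟨F.restrictScalars k, fun g v => ?_⟩
  have hsmulM : ∀ m : M, (π (MonoidAlgebra.of k G g)) • m = ρ g m := by
    intro m
    show (ρ.asAlgebraHom (MonoidAlgebra.of k G g)) m = ρ g m
    rw [Representation.asAlgebraHom_of]
  have hsmulN : ∀ n : N, (π (MonoidAlgebra.of k G g)) • n = σ g n := by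
    intro n
    show (σ.asAlgebraHom (MonoidAlgebra.of k G g)) n = σ g n
    rw [Representation.asAlgebraHom_of]
  show F (ρ g v) = σ g (F v)
  rw [← hsmulM v, ← hsmulN (F v)]
  exact F.map_smul (π (MonoidAlgebra.of k G g)) v
end
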